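/- For the 2×2 system with flux potential K(u,v), the characteristic velocity μ = (1/2)·d²K̄/du² of the equilibrium subsystem, where K̄(u) = K(u,u), satisfies P_E(μ) = -(1/4)·(K_uu(u,u) - K_vv(u,u))² ≤ 0, where P_E(λ) = λ² - (K_uu + K_vv)|_{v=u}·λ + (K_uu·K_vv - K_uv²)|_{v=u} is the characteristic polynomial of the full system evaluated at equilibrium. -/

import Mathlib

/-- P_E(μ) = -(1/4)(K_uu - K_vv)|_E² ≤ 0 for the equilibrium
subsystem characteristic velocity μ = (1/2)K̄''(u), K̄(u) = K(u,u). -/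
theorem stmt_0 (K : ℝ → ℝ → ℝ) (hK : ContDiff ℝ 2 (fun p : ℝ × ℝ => K p.1 p.2))
    (u : ℝ)
    (Kuu Kuv Kvv : ℝ)
    (hKuu : Kuu = deriv (fun x => deriv (fun x' => K x' u) x) u)
    (hKuv : Kuv = deriv (fun y => deriv (fun x' => K x' y) u) u)
    (hKvv : Kvv = deriv (fun y => deriv (fun y' => K u y') y) u)
    (μ : ℝ) (hμ : μ = (1/2) * deriv (deriv (fun x => K x x)) u)
    (PE : ℝ → ℝ)
    (hPE : ∀ lam, PE lam = lam ^ 2 - (Kuu + Kvv) * lam + (Kuu * Kvv - Kuv ^ 2)) :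
    PE μ = -(1/4) * (Kuu - Kvv) ^ 2 ∧ PE μ ≤ 0 := by
  set f : ℝ × ℝ → ℝ := fun p => K p.1 p.2 with hfdef
  have hdf : Differentiable ℝ f := hK.differentiable (by norm_num)
  have hf' : ∀ p, HasFDerivAt f (fderiv ℝ f p) p := fun p => (hdf p).hasFDerivAt
  have hcd1 : ContDiff ℝ 1 (fderiv ℝ f) := hK.fderiv_right (by norm_num)
  have hdf' : Differentiable ℝ (fderiv ℝ f) := hcd1.differentiable (by norm_num)
  set B := fderiv ℝ (fderiv ℝ f) (u, u) with hBdef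
  have hB : HasFDerivAt (fderiv ℝ f) B (u, u) := (hdf' (u, u)).hasFDerivAt
  have hsymm := second_derivative_symmetric hf' hB ((1:ℝ), (0:ℝ)) ((0:ℝ), (1:ℝ))
  -- second derivative of the diagonal
  have hdiag : ∀ x : ℝ, HasDerivAt (fun x : ℝ => ((x, x) : ℝ × ℝ)) (1, 1) x :=
    fun x => HasDerivAt.prodMk (hasDerivAt_id x) (hasDerivAt_id x)
  have hg' : ∀ x, HasDerivAt (fun x => K x x) (fderiv ℝ f (x, x) (1, 1)) x := by
    intro x
    have h := (hf' (x, x)).comp_hasDerivAt_of_eq x (hdiag x) rfl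
    exact h
  have hderivg : deriv (fun x => K x x) = fun x => fderiv ℝ f (x, x) (1, 1) :=
    funext fun x => (hg' x).deriv
  have step1 := hB.comp_hasDerivAt_of_eq u (hdiag u) rfl
  have hg'' : HasDerivAt (fun x => fderiv ℝ f (x, x) (1, 1)) (B (1, 1) (1, 1)) u :=
    (ContinuousLinearMap.apply ℝ ℝ ((1:ℝ), (1:ℝ))).hasFDerivAt.comp_hasDerivAt u step1
  have hgval : deriv (deriv (fun x => K x x)) u = B (1, 1) (1, 1) := by
    rw [hderivg]; exact hg''.deriv
  -- Kuu
  have hxpath : ∀ x : ℝ, HasDerivAt (fun x : ℝ => ((x, u) : ℝ × ℝ)) (1, 0) x :=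
    fun x => HasDerivAt.prodMk (hasDerivAt_id x) (hasDerivAt_const x u)
  have hypath : ∀ y : ℝ, HasDerivAt (fun y : ℝ => ((u, y) : ℝ × ℝ)) (0, 1) y :=
    fun y => HasDerivAt.prodMk (hasDerivAt_const y u) (hasDerivAt_id y)
  have hKuu' : Kuu = B (1, 0) (1, 0) := by
    rw [hKuu]
    have h1 : deriv (fun x' => K x' u) = fun x => fderiv ℝ f (x, u) (1, 0) :=
      funext fun x => HasDerivAt.deriv ((hf' (x, u)).comp_hasDerivAt_of_eq x (hxpath x) rfl)
    rw [h1]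
    have step := hB.comp_hasDerivAt_of_eq u (hxpath u) rfl
    exact ((ContinuousLinearMap.apply ℝ ℝ ((1:ℝ), (0:ℝ))).hasFDerivAt.comp_hasDerivAt
      u step).deriv
  have hKuv' : Kuv = B (0, 1) (1, 0) := by
    rw [hKuv]
    have h1 : (fun y => deriv (fun x' => K x' y) u) = fun y => fderiv ℝ f (u, y) (1, 0) := by
      funext y
      exact HasDerivAt.deriv ((hf' (u, y)).comp_hasDerivAt_of_eq u
        (HasDerivAt.prodMk (hasDerivAt_id u) (hasDerivAt_const u y)) rfl)
    rw [h1]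
    have step := hB.comp_hasDerivAt_of_eq u (hypath u) rfl
    exact ((ContinuousLinearMap.apply ℝ ℝ ((1:ℝ), (0:ℝ))).hasFDerivAt.comp_hasDerivAt
      u step).deriv
  have hKvv' : Kvv = B (0, 1) (0, 1) := by
    rw [hKvv]
    have h1 : deriv (fun y' => K u y') = fun y => fderiv ℝ f (u, y) (0, 1) :=
      funext fun y => HasDerivAt.deriv ((hf' (u, y)).comp_hasDerivAt_of_eq y (hypath y) rfl)
    rw [h1]
    have step := hB.comp_hasDerivAt_of_eq u (hypath u) rfl
    exact ((ContinuousLinearMap.apply ℝ ℝ ((0:ℝ), (1:ℝ))).hasFDerivAt.comp_hasDerivAt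
      u step).deriv
  have hexp : B (1, 1) (1, 1)
      = B (1, 0) (1, 0) + B (1, 0) (0, 1) + B (0, 1) (1, 0) + B (0, 1) (0, 1) := by
    have h11 : ((1:ℝ), (1:ℝ)) = ((1:ℝ), (0:ℝ)) + ((0:ℝ), (1:ℝ)) := by simp
    rw [h11]
    simp only [map_add, ContinuousLinearMap.add_apply]
    ring
  have hμ' : μ = (1/2) * (Kuu + 2 * Kuv + Kvv) := by
    rw [hμ, hgval, hexp, hKuu', hKuv', hKvv', hsymm]; ring
  have key : PE μ = -(1/4) * (Kuu - Kvv) ^ 2 := by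
    rw [hPE, hμ']; ring
  refine ⟨key, ?_⟩
  rw [key]
  nlinarith [sq_nonneg (Kuu - Kvv)]
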